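/- For the Plebański–Demiański metric with aL_z = (a² − 2alC + l²)E, the quantities g̃^{0j}p_j and g̃^{3j}p_j (with g̃^{ij} = R^{ij}(r) + Θ^{ij}(θ)) evaluated at r = 0, cosθ = −l/a satisfy: g̃^{0j}p_j = −(a² − 2alC + l²)·Q²·((a²−2alC+l²)E − aL_z)/((a²−l²)(a²+Q²−l²)) = 0 and g̃^{3j}p_j = 0; moreover ∂_r(g̃^{0j}p_j)|_q = (a²−2alC+l²)·2m((a²−2alC+l²)E − aL_z)/((a²+Q²−l²)²) = 0 and ∂_θ(g̃^{0j}p_j)|_q = 0, and similarly for the i = 3 components. -/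

import Mathlib

set_option maxHeartbeats 1000000


/-- `g̃^{0j} pⱼ = (R^{00} + Θ^{00})(−E) + (R^{03} + Θ^{03}) L_z` for the
Plebański–Demiański metric. -/
noncomputable def PDG0 (m a l C Q E Lz r θ : ℝ) : ℝ :=
  (-((r ^ 2 + a ^ 2 + l ^ 2 - 2 * a * l * C) ^ 2) /
        (r ^ 2 - 2 * m * r + a ^ 2 - l ^ 2 + Q ^ 2)
      + (a * Real.sin θ ^ 2 - 2 * l * (Real.cos θ + C)) ^ 2 / Real.sin θ ^ 2) *
      (-E) +
    (-(a * (r ^ 2 + a ^ 2 + l ^ 2 - 2 * a * l * C)) /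
        (r ^ 2 - 2 * m * r + a ^ 2 - l ^ 2 + Q ^ 2)
      + (a * Real.sin θ ^ 2 - 2 * l * (Real.cos θ + C)) / Real.sin θ ^ 2) * Lz

/-- `g̃^{3j} pⱼ = (R^{03} + Θ^{03})(−E) + (R^{33} + Θ^{33}) L_z` for the
Plebański–Demiański metric. -/
noncomputable def PDG3 (m a l C Q E Lz r θ : ℝ) : ℝ :=
  (-(a * (r ^ 2 + a ^ 2 + l ^ 2 - 2 * a * l * C)) /
        (r ^ 2 - 2 * m * r + a ^ 2 - l ^ 2 + Q ^ 2)
      + (a * Real.sin θ ^ 2 - 2 * l * (Real.cos θ + C)) / Real.sin θ ^ 2) *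
      (-E) +
    (-(a ^ 2) / (r ^ 2 - 2 * m * r + a ^ 2 - l ^ 2 + Q ^ 2)
      + 1 / Real.sin θ ^ 2) * Lz

/-- Equation (33): under the constraint `a L_z = (a² − 2alC + l²) E`, the
quantities `g̃^{ij} pⱼ` and their first `r`- and `θ`-derivatives all vanish at
the ring singularity `r = 0`, `cos θ = −l/a`, verifying condition ii of
Theorem 2 for the principal null rays. -/
theorem PD_condition_ii (m a l C Q E Lz θ₀ : ℝ)
    (ha : l ^ 2 < a ^ 2) (hQ : 0 < a ^ 2 + Q ^ 2 - l ^ 2)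
    (hθ : Real.cos θ₀ = -l / a)
    (hE : a * Lz = (a ^ 2 - 2 * a * l * C + l ^ 2) * E) :
    PDG0 m a l C Q E Lz 0 θ₀ = 0 ∧
    PDG3 m a l C Q E Lz 0 θ₀ = 0 ∧
    deriv (fun r => PDG0 m a l C Q E Lz r θ₀) 0 = 0 ∧
    deriv (fun θ => PDG0 m a l C Q E Lz 0 θ) θ₀ = 0 ∧
    deriv (fun r => PDG3 m a l C Q E Lz r θ₀) 0 = 0 ∧
    deriv (fun θ => PDG3 m a l C Q E Lz 0 θ) θ₀ = 0 := by
  have ha0 : a ≠ 0 := by intro h; rw [h] at ha; nlinarith [sq_nonneg l]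
  have hal : a ^ 2 - l ^ 2 ≠ 0 := by intro h; nlinarith
  have hLz : Lz = (a ^ 2 - 2 * a * l * C + l ^ 2) * E / a := by
    rw [eq_div_iff ha0]; linear_combination hE
  have hs : Real.sin θ₀ ^ 2 = (a ^ 2 - l ^ 2) / a ^ 2 := by
    rw [Real.sin_sq, hθ]; field_simp
  have hspos : 0 < Real.sin θ₀ ^ 2 := by
    rw [hs]; apply div_pos (by linarith) (by positivity)
  have hsinne : Real.sin θ₀ ≠ 0 := by
    intro h; rw [h] at hspos; simp at hspos
  have hθ0 : l + a * Real.cos θ₀ = 0 := by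
    rw [hθ]
    field_simp
    ring
  have hQ' : a ^ 2 - l ^ 2 + Q ^ 2 ≠ 0 := by intro h; nlinarith
  -- the polynomial pieces
  set K : ℝ := a ^ 2 + l ^ 2 - 2 * a * l * C with hK
  set D : ℝ → ℝ := fun r => r ^ 2 - 2 * m * r + a ^ 2 - l ^ 2 + Q ^ 2 with hD
  have hD0 : D 0 ≠ 0 := by
    have : D 0 = a ^ 2 - l ^ 2 + Q ^ 2 := by simp [hD]
    rw [this]; exact hQ'
  have hDev : ∀ᶠ r in nhds (0 : ℝ), D r ≠ 0 := by
    have hc : ContinuousAt D 0 := by fun_prop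
    exact hc.eventually_ne hD0
  have hsev : ∀ᶠ θ in nhds θ₀, Real.sin θ ≠ 0 :=
    Real.continuous_sin.continuousAt.eventually_ne hsinne
  -- the θ-direction reduced forms
  set f1 : ℝ → ℝ := fun θ =>
    E / a * ((a * Real.sin θ ^ 2 - 2 * l * (Real.cos θ + C)) / Real.sin θ ^ 2) with hf1
  set f13 : ℝ → ℝ := fun θ => E / a * (1 / Real.sin θ ^ 2) with hf13
  set f2 : ℝ → ℝ := fun θ => (l + a * Real.cos θ) ^ 2 with hf2
  have key0θ : ∀ θ, Real.sin θ ≠ 0 → PDG0 m a l C Q E Lz 0 θ = f1 θ * f2 θ := by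
    intro θ h
    have h2 : Real.sin θ ^ 2 ≠ 0 := pow_ne_zero 2 h
    have hs2 : Real.sin θ ^ 2 = 1 - Real.cos θ ^ 2 := Real.sin_sq θ
    have h2' : 1 - Real.cos θ ^ 2 ≠ 0 := hs2 ▸ h2
    simp only [PDG0, hf1, hf2]
    rw [hLz, hs2]
    field_simp
    ring
  have key3θ : ∀ θ, Real.sin θ ≠ 0 → PDG3 m a l C Q E Lz 0 θ = f13 θ * f2 θ := by
    intro θ h
    have h2 : Real.sin θ ^ 2 ≠ 0 := pow_ne_zero 2 h
    have hs2 : Real.sin θ ^ 2 = 1 - Real.cos θ ^ 2 := Real.sin_sq θ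
    have h2' : 1 - Real.cos θ ^ 2 ≠ 0 := hs2 ▸ h2
    simp only [PDG3, hf13, hf2]
    rw [hLz, hs2]
    field_simp
    ring
  -- the r-direction reduced forms
  have key0r : ∀ r, D r ≠ 0 →
      PDG0 m a l C Q E Lz r θ₀ = E * (r ^ 2 * (r ^ 2 + K)) / D r := by
    intro r h
    simp only [PDG0, hD, hK] at h ⊢
    rw [hLz, hs, hθ]
    field_simp
    ring
  have key3r : ∀ r, D r ≠ 0 →
      PDG3 m a l C Q E Lz r θ₀ = a * E * r ^ 2 / D r := by
    intro r h
    simp only [PDG3, hD, hK] at h ⊢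
    rw [hLz, hs, hθ]
    field_simp
    ring
  -- values
  have hf2z : f2 θ₀ = 0 := by simp [hf2, hθ0]
  have hv0 : PDG0 m a l C Q E Lz 0 θ₀ = 0 := by
    rw [key0θ θ₀ hsinne, hf2z, mul_zero]
  have hv3 : PDG3 m a l C Q E Lz 0 θ₀ = 0 := by
    rw [key3θ θ₀ hsinne, hf2z, mul_zero]
  -- r derivatives
  have hr2 : HasDerivAt (fun r : ℝ => r ^ 2) 0 0 := by
    simpa using hasDerivAt_pow 2 (0 : ℝ)
  have hdD : HasDerivAt D (-(2 * m)) 0 := by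
    have h1 := ((((hr2.sub ((hasDerivAt_id (0:ℝ)).const_mul (2 * m))).add_const
      (a ^ 2)).sub_const (l ^ 2)).add_const (Q ^ 2))
    simpa [hD, id] using h1
  have hdn0 : HasDerivAt (fun r : ℝ => E * (r ^ 2 * (r ^ 2 + K)))
      (E * (0 * ((0:ℝ) ^ 2 + K) + (0:ℝ) ^ 2 * 0)) 0 :=
    (hr2.mul (hr2.add_const K)).const_mul E
  have hdr0 : deriv (fun r => PDG0 m a l C Q E Lz r θ₀) 0 = 0 := by
    have hev : (fun r => PDG0 m a l C Q E Lz r θ₀) =ᶠ[nhds (0:ℝ)]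
        (fun r => E * (r ^ 2 * (r ^ 2 + K)) / D r) :=
      hDev.mono fun r hr => key0r r hr
    rw [hev.deriv_eq]
    have h := (hdn0.fun_div hdD hD0).deriv
    simpa using h
  have hdn3 : HasDerivAt (fun r : ℝ => a * E * r ^ 2) (a * E * 0) 0 :=
    hr2.const_mul (a * E)
  have hdr3 : deriv (fun r => PDG3 m a l C Q E Lz r θ₀) 0 = 0 := by
    have hev : (fun r => PDG3 m a l C Q E Lz r θ₀) =ᶠ[nhds (0:ℝ)]
        (fun r => a * E * r ^ 2 / D r) :=
      hDev.mono fun r hr => key3r r hr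
    rw [hev.deriv_eq]
    have h := (hdn3.fun_div hdD hD0).deriv
    simpa using h
  -- θ derivatives
  have hs2ne : Real.sin θ₀ ^ 2 ≠ 0 := pow_ne_zero 2 hsinne
  have hdf2 : HasDerivAt f2 (2 * (l + a * Real.cos θ₀) ^ 1 * (a * (-Real.sin θ₀))) θ₀ := by
    exact (((Real.hasDerivAt_cos θ₀).const_mul a).const_add l).pow 2
  have hdf2' : deriv f2 θ₀ = 0 := by
    rw [hdf2.deriv, hθ0]; ring
  have hdiff1 : DifferentiableAt ℝ f1 θ₀ := by
    apply DifferentiableAt.const_mul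
    exact DifferentiableAt.div (by fun_prop) (by fun_prop) hs2ne
  have hdiff13 : DifferentiableAt ℝ f13 θ₀ := by
    apply DifferentiableAt.const_mul
    exact DifferentiableAt.div (by fun_prop) (by fun_prop) hs2ne
  have hdθ0 : deriv (fun θ => PDG0 m a l C Q E Lz 0 θ) θ₀ = 0 := by
    have hev : (fun θ => PDG0 m a l C Q E Lz 0 θ) =ᶠ[nhds θ₀]
        (fun θ => f1 θ * f2 θ) := hsev.mono fun θ h => key0θ θ h
    rw [hev.deriv_eq, deriv_fun_mul hdiff1 hdf2.differentiableAt, hdf2', hf2z]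
    ring
  have hdθ3 : deriv (fun θ => PDG3 m a l C Q E Lz 0 θ) θ₀ = 0 := by
    have hev : (fun θ => PDG3 m a l C Q E Lz 0 θ) =ᶠ[nhds θ₀]
        (fun θ => f13 θ * f2 θ) := hsev.mono fun θ h => key3θ θ h
    rw [hev.deriv_eq, deriv_fun_mul hdiff13 hdf2.differentiableAt, hdf2', hf2z]
    ring
  exact ⟨hv0, hv3, hdr0, hdθ0, hdr3, hdθ3⟩
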